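/- Every real number x ∈ [0,1] admits a representation x = ∑_{n=1}^∞ (-1)^{n+1}(1+ε_n)/(d₁⋯d_n) with digits ε_n ∈ {0,…,d_n−1}. -/

import Mathlib

/-- The remainder sequence for the greedy nega-Cantor algorithm. -/
noncomputable def negaX (d : ℕ → ℕ) (x : ℝ) : ℕ → ℝ
  | 0 => x
  | k+1 => 1 + (min ⌊(d (k+1) : ℝ) * negaX d x k⌋₊ (d (k+1) - 1) : ℕ)
      - (d (k+1) : ℝ) * negaX d x k

/-- Every x ∈ [0,1] admits a representation
x = ∑_{n=1}^∞ (-1)^{n+1}(1+ε_n)/(d₁⋯d_n) with digits ε_n ∈ {0,…,d_n−1}. -/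
theorem nega_cantor_representation (d : ℕ → ℕ) (hd : ∀ n, 1 ≤ n → 2 ≤ d n) (x : ℝ)
    (hx : x ∈ Set.Icc (0 : ℝ) 1) :
    ∃ ε : ℕ → ℕ, (∀ n, 1 ≤ n → ε n < d n) ∧
      x = ∑' n : ℕ, (-1 : ℝ) ^ (n + 2) * (1 + (ε (n + 1) : ℝ)) /
            ∏ j ∈ Finset.Icc 1 (n + 1), (d j : ℝ) := by
  obtain ⟨hx0, hx1⟩ := hx
  set ε : ℕ → ℕ := fun n => min ⌊(d n : ℝ) * negaX d x (n - 1)⌋₊ (d n - 1) with hεdef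
  -- basic facts about products
  have hPpos : ∀ N, (0:ℝ) < ∏ j ∈ Finset.Icc 1 N, (d j : ℝ) := by
    intro N
    apply Finset.prod_pos
    intro j hj
    have := hd j (Finset.mem_Icc.mp hj).1
    positivity
  have hPge : ∀ N, (2:ℝ)^N ≤ ∏ j ∈ Finset.Icc 1 N, (d j : ℝ) := by
    intro N
    have : ∏ j ∈ Finset.Icc 1 N, (2:ℝ) ≤ ∏ j ∈ Finset.Icc 1 N, (d j : ℝ) := by
      apply Finset.prod_le_prod
      · intro j _; norm_num
      · intro j hj
        exact_mod_cast hd j (Finset.mem_Icc.mp hj).1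
    simpa [Nat.card_Icc] using this
  have hPsucc : ∀ N, ∏ j ∈ Finset.Icc 1 (N+1), (d j : ℝ)
      = (∏ j ∈ Finset.Icc 1 N, (d j : ℝ)) * d (N+1) := by
    intro N
    exact Finset.prod_Icc_succ_top (by omega) _
  -- the remainders stay in [0,1]
  have hX : ∀ k, 0 ≤ negaX d x k ∧ negaX d x k ≤ 1 := by
    intro k
    induction k with
    | zero => exact ⟨hx0, hx1⟩
    | succ k ih =>
      obtain ⟨h0, h1⟩ := ih
      have hD : 2 ≤ d (k+1) := hd (k+1) (by omega)
      set y := negaX d x k with hy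
      set D := d (k+1) with hDdef
      set e := min ⌊(D : ℝ) * y⌋₊ (D - 1) with he
      have hDy0 : (0:ℝ) ≤ (D:ℝ) * y := by positivity
      have hup : (e:ℝ) ≤ (D:ℝ) * y := by
        calc (e:ℝ) ≤ (⌊(D:ℝ) * y⌋₊ : ℝ) := by exact_mod_cast min_le_left _ _
        _ ≤ (D:ℝ) * y := Nat.floor_le hDy0
      have hlow : (D:ℝ) * y - 1 ≤ (e:ℝ) := by
        rcases le_or_gt (⌊(D:ℝ) * y⌋₊) (D - 1) with h | h
        · have h1' : e = ⌊(D:ℝ) * y⌋₊ := min_eq_left h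
          have h2' := Nat.lt_floor_add_one ((D:ℝ) * y)
          rw [h1']
          push_cast at h2' ⊢
          linarith
        · have h1' : e = D - 1 := min_eq_right h.le
          have h2' : (D:ℝ) * y ≤ (D:ℝ) := by nlinarith [show (0:ℝ) < (D:ℝ) from by exact_mod_cast (show 0 < D by omega)]
          have hc : ((D - 1 : ℕ):ℝ) = (D:ℝ) - 1 := by
            have : 1 ≤ D := by omega
            push_cast [this]
            ring
          rw [h1', hc]
          linarith
      have hXs : negaX d x (k+1) = 1 + (e:ℝ) - (D:ℝ) * y := by
        simp only [negaX, he, hy, hDdef]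
      rw [hXs]
      constructor <;> linarith
  -- the remainder identity
  have key : ∀ N, x - ∑ k ∈ Finset.range N,
      ((-1 : ℝ) ^ (k + 2) * (1 + (ε (k + 1) : ℝ)) / ∏ j ∈ Finset.Icc 1 (k + 1), (d j : ℝ))
      = (-1)^N * negaX d x N / ∏ j ∈ Finset.Icc 1 N, (d j : ℝ) := by
    intro N
    induction N with
    | zero => simp [negaX]
    | succ N ih =>
      rw [Finset.sum_range_succ, sub_add_eq_sub_sub, ih]
      have hP := hPpos N
      have hD : (0:ℝ) < d (N+1) := by
        have := hd (N+1) (by omega); positivity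
      have hXs : negaX d x (N+1) = 1 + (ε (N+1) : ℝ) - (d (N+1):ℝ) * negaX d x N := by
        simp only [negaX, hεdef, Nat.add_sub_cancel]
      rw [hXs, hPsucc N]
      rw [show ((-1:ℝ))^(N+2) = (-1)^N from by rw [pow_add]; ring,
          show ((-1:ℝ))^(N+1) = -(-1)^N from by rw [pow_succ]; ring]
      field_simp
      ring
  refine ⟨ε, ?_, ?_⟩
  · intro n hn
    have hD := hd n hn
    calc ε n ≤ d n - 1 := min_le_right _ _
    _ < d n := by omega
  -- convergence
  set f : ℕ → ℝ := fun n => (-1 : ℝ) ^ (n + 2) * (1 + (ε (n + 1) : ℝ)) /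
      ∏ j ∈ Finset.Icc 1 (n + 1), (d j : ℝ) with hf
  have hbound : ∀ k, ‖f k‖ ≤ (1/2 : ℝ)^k := by
    intro k
    have hD : 2 ≤ d (k+1) := hd (k+1) (by omega)
    have hP := hPpos k
    have hP1 := hPpos (k+1)
    have hge := hPge k
    have he : (ε (k+1) : ℝ) ≤ (d (k+1) : ℝ) - 1 := by
      have h1 : ε (k+1) ≤ d (k+1) - 1 := min_le_right _ _
      have : ((d (k+1) - 1 : ℕ):ℝ) = (d (k+1):ℝ) - 1 := by
        have : 1 ≤ d (k+1) := by omega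
        push_cast [this]; ring
      rw [← this]
      exact_mod_cast h1
    have habs : ‖f k‖ = (1 + (ε (k+1) : ℝ)) / ∏ j ∈ Finset.Icc 1 (k+1), (d j : ℝ) := by
      rw [hf]
      rw [Real.norm_eq_abs, abs_div, abs_mul, abs_pow, abs_neg, abs_one, one_pow, one_mul,
        abs_of_pos (by positivity), abs_of_pos hP1]
    rw [habs, hPsucc k]
    rw [div_le_iff₀ (by rw [← hPsucc k]; exact hP1)]
    have h2k : (0:ℝ) < 2^k := by positivity
    have : (1/2:ℝ)^k = 1/2^k := by rw [div_pow]; norm_num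
    rw [this]
    rw [div_mul_eq_mul_div, le_div_iff₀ h2k]
    have hDc : (0:ℝ) < (d (k+1):ℝ) := by positivity
    nlinarith [mul_le_mul_of_nonneg_left hge hDc.le]
  have hsummable : Summable f :=
    Summable.of_norm_bounded (summable_geometric_of_lt_one (by norm_num) (by norm_num)) hbound
  have hlim : Filter.Tendsto (fun N => ∑ k ∈ Finset.range N, f k) Filter.atTop (nhds x) := by
    rw [← tendsto_sub_nhds_zero_iff]
    have h0 : Filter.Tendsto (fun N : ℕ => (1/2:ℝ)^N) Filter.atTop (nhds 0) :=
      tendsto_pow_atTop_nhds_zero_of_lt_one (by norm_num) (by norm_num)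
    refine squeeze_zero_norm ?_ h0
    intro N
    show ‖∑ k ∈ Finset.range N, f k - x‖ ≤ (1/2:ℝ)^N
    have hk := key N
    have : ∑ k ∈ Finset.range N, f k - x
        = -((-1)^N * negaX d x N / ∏ j ∈ Finset.Icc 1 N, (d j : ℝ)) := by
      rw [← hk]; ring
    rw [this, norm_neg, Real.norm_eq_abs, abs_div, abs_mul, abs_pow, abs_neg, abs_one,
      one_pow, one_mul, abs_of_pos (hPpos N)]
    obtain ⟨hX0, hX1⟩ := hX N
    rw [abs_of_nonneg hX0]
    have hge := hPge N
    have : (1/2:ℝ)^N = 1/2^N := by rw [div_pow]; norm_num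
    rw [this, div_le_div_iff₀ (hPpos N) (by positivity)]
    nlinarith [hPpos N]
  have := tendsto_nhds_unique hsummable.hasSum.tendsto_sum_nat hlim
  rw [← this]
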